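/- Let C be a commutative Noetherian ring that is a ℚ-algebra. Then for every nonzero formal power series f ∈ C⟦X⟧ there exist k, n ∈ ℕ, a power series g ∈ C⟦X⟧ with f = X^k * g, power series b_0, …, b_n ∈ C⟦X⟧, and a nonzero element c ∈ C such that Σ_{i=0}^{n} b_i * D^[i](g) = PowerSeries.C(c), where D denotes the formal derivative d/dX on C⟦X⟧ and D^[i] its i-th iterate. -/

import Mathlib

section AccRec

variable {α : Type*}

/-- Accumulating recursion: builds a sequence where each value may depend on all earlier ones. -/
noncomputable def accRec (z : α) (F : (ℕ → α) → ℕ → α) : ℕ → ℕ → α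
  | 0 => fun _ => z
  | m + 1 => Function.update (accRec z F m) m (F (accRec z F m) m)

/-- The sequence defined by the accumulating recursion. -/
noncomputable def seqOf (z : α) (F : (ℕ → α) → ℕ → α) (m : ℕ) : α :=
  accRec z F (m + 1) m

lemma accRec_eq_seqOf (z : α) (F : (ℕ → α) → ℕ → α)
    (_hF : ∀ g h m, (∀ p, p < m → g p = h p) → F g m = F h m) :
    ∀ m p, p < m → accRec z F m p = seqOf z F p := by
  intro m
  induction m with
  | zero => intro p hp; omega
  | succ m ih =>
    intro p hp
    rcases eq_or_lt_of_le (Nat.lt_succ_iff.mp hp) with h | h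
    · subst h; rfl
    · show Function.update (accRec z F m) m _ p = _
      rw [Function.update_of_ne (by omega)]
      exact ih p h

lemma seqOf_eq (z : α) (F : (ℕ → α) → ℕ → α)
    (hF : ∀ g h m, (∀ p, p < m → g p = h p) → F g m = F h m) (m : ℕ) :
    seqOf z F m = F (seqOf z F) m := by
  show Function.update (accRec z F m) m (F (accRec z F m) m) m = _
  rw [Function.update_self]
  exact hF _ _ _ (fun p hp => accRec_eq_seqOf z F hF m p hp)

end AccRec

lemma coeff_iter_derivativeFun {A : Type*} [CommRing A] (f : PowerSeries A) (i q : ℕ) :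
    PowerSeries.coeff q ((PowerSeries.derivativeFun)^[i] f) =
      ((∏ t ∈ Finset.range i, (q + t + 1) : ℕ) : A) * PowerSeries.coeff (q + i) f := by
  induction i generalizing q with
  | zero => simp
  | succ i ih =>
    rw [Function.iterate_succ_apply', (show PowerSeries.coeff q (PowerSeries.derivativeFun (PowerSeries.derivativeFun^[i] f)) = _ from
      PowerSeries.coeff_derivative (PowerSeries.derivativeFun^[i] f) q), ih (q + 1)]
    have h1 : (∏ t ∈ Finset.range (i + 1), (q + t + 1))
        = (∏ t ∈ Finset.range i, (q + 1 + t + 1)) * (q + 1) := by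
      rw [Finset.prod_range_succ']
      have hp : ∀ t ∈ Finset.range i, q + (t + 1) + 1 = q + 1 + t + 1 := fun t _ => by omega
      rw [Finset.prod_congr rfl hp]
    have h2 : q + 1 + i = q + (i + 1) := by omega
    rw [h2] at *
    rw [h1]
    push_cast
    ring

/-- Over a commutative Noetherian ring `A` containing `ℚ`, for every
nonzero formal power series `f` there are `k, n : ℕ`, a power series `g` with
`f = X ^ k * g`, power series `b 0, …, b n`, and a nonzero constant `c` such that
`Σ_{i=0}^{n} b i * D^[i] g = C c`, where `D` is the formal derivative `d/dX`. -/
theorem stmt_7 {A : Type*} [CommRing A] [IsNoetherianRing A] [Algebra ℚ A]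
    (f : PowerSeries A) (hf : f ≠ 0) :
    ∃ (k n : ℕ) (g : PowerSeries A) (b : ℕ → PowerSeries A) (c : A),
      c ≠ 0 ∧ f = PowerSeries.X ^ k * g ∧
      ∑ i ∈ Finset.range (n + 1), b i * (PowerSeries.derivativeFun)^[i] g
        = PowerSeries.C c := by
  classical
  set a : ℕ → A := fun j => PowerSeries.coeff j f with ha
  obtain ⟨j0, hj0⟩ : ∃ j, a j ≠ 0 := by
    by_contra h
    push_neg at h
    exact hf (PowerSeries.ext fun n => by simpa [ha] using h n)
  -- the chain of ideals of initial coefficients stabilizes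
  let J : ℕ →o Submodule A A :=
    ⟨fun n => Ideal.span (a '' Set.Iic n),
      fun n m hnm => Ideal.span_mono (Set.image_mono (Set.Iic_subset_Iic.mpr hnm))⟩
  obtain ⟨N, hN⟩ := monotone_stabilizes_iff_noetherian.mpr inferInstance J
  have haN : ∀ j, a j ∈ J N := by
    intro j
    have h1 : a j ∈ J (max j N) :=
      Ideal.subset_span ⟨j, Set.mem_Iic.mpr (le_max_left _ _), rfl⟩
    rwa [← hN (max j N) (le_max_right _ _)] at h1
  set s : Fin (N + 1) → A := fun i => a i with hs
  have hJ : (J N : Submodule A A) = Submodule.span A (Set.range s) := by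
    have himg : a '' Set.Iic N = Set.range s := by
      ext x
      constructor
      · rintro ⟨j, hj, rfl⟩
        exact ⟨⟨j, Nat.lt_succ_of_le hj⟩, rfl⟩
      · rintro ⟨i, rfl⟩
        exact ⟨i, Set.mem_Iic.mpr (Nat.lt_succ_iff.mp i.isLt), rfl⟩
    show Ideal.span (a '' Set.Iic N) = _
    rw [himg, Ideal.submodule_span_eq]
  have hrepex : ∀ r ∈ Submodule.span A (Set.range s), ∃ x : Fin (N + 1) → A,
      ∑ i, x i • s i = r := fun r hr => Submodule.mem_span_range_iff_exists_fun A |>.mp hr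
  set rep : A → Fin (N + 1) → A := fun r =>
    if h : r ∈ Submodule.span A (Set.range s) then (hrepex r h).choose else 0 with hrepdef
  have hrep : ∀ r, r ∈ Submodule.span A (Set.range s) →
      ∑ i : Fin (N + 1), rep r i * s i = r := by
    intro r h
    simp only [hrepdef, dif_pos h]
    simpa [smul_eq_mul] using (hrepex r h).choose_spec
  -- coefficients of iterated derivatives
  set d : ℕ → ℕ → A := fun i q => PowerSeries.coeff q ((PowerSeries.derivativeFun)^[i] f)
    with hd
  have hdval : ∀ i q, d i q = ((∏ t ∈ Finset.range i, (q + t + 1) : ℕ) : A) * a (q + i) :=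
    fun i q => coeff_iter_derivativeFun f i q
  have hdmem : ∀ i q, d i q ∈ Submodule.span A (Set.range s) := by
    intro i q
    rw [hdval]
    have hmem := haN (q + i)
    rw [hJ] at hmem
    exact Ideal.mul_mem_left _ _ hmem
  set e : ℕ → ℕ := fun i => ∏ t ∈ Finset.range i, (t + 1) with he
  have hepos : ∀ i, 0 < e i := fun i => Finset.prod_pos fun t _ => t.succ_pos
  set fInv : ℕ → A := fun i => algebraMap ℚ A ((e i : ℚ))⁻¹ with hfInv
  have hfInvmul : ∀ i, fInv i * (e i : A) = 1 := by
    intro i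
    have h0 : ((e i : ℚ)) ≠ 0 := Nat.cast_ne_zero.mpr (hepos i).ne'
    rw [hfInv]
    rw [show ((e i : A)) = algebraMap ℚ A ((e i : ℚ)) from (map_natCast (algebraMap ℚ A) (e i)).symm,
      ← map_mul, inv_mul_cancel₀ h0, map_one]
  have hd0 : ∀ i : ℕ, d i 0 = (e i : A) * a i := by
    intro i
    have h1 : (∏ t ∈ Finset.range i, (0 + t + 1)) = e i :=
      Finset.prod_congr rfl fun t _ => by omega
    have h2 : 0 + i = i := Nat.zero_add i
    rw [hdval, h1, h2]
  set tt : ℕ → A := fun m => if m = 0 then a j0 else 0 with htt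
  -- the recursion producing the coefficients of the b i
  set F : (ℕ → Fin (N + 1) → A) → ℕ → Fin (N + 1) → A := fun prev m => fun i =>
    rep (tt m - ∑ i' : Fin (N + 1), ∑ p ∈ Finset.range m, prev p i' * d i'.1 (m - p)) i
      * fInv i.1 with hF
  have hFdep : ∀ g h m, (∀ p, p < m → g p = h p) → F g m = F h m := by
    intro g h m hgh
    funext i
    simp only [hF]
    congr 3
    refine Finset.sum_congr rfl fun i' _ => Finset.sum_congr rfl fun p hp => ?_
    rw [hgh p (Finset.mem_range.mp hp)]
  set β : ℕ → Fin (N + 1) → A := seqOf (fun _ => 0) F with hβ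
  have hβeq : ∀ m, β m = F β m := fun m => seqOf_eq _ F hFdep m
  set r : ℕ → A := fun m =>
    tt m - ∑ i' : Fin (N + 1), ∑ p ∈ Finset.range m, β p i' * d i'.1 (m - p) with hrr
  have hrmem : ∀ m, r m ∈ Submodule.span A (Set.range s) := by
    intro m
    refine Submodule.sub_mem _ ?_ (Submodule.sum_mem _ fun i' _ =>
      Submodule.sum_mem _ fun p _ => Ideal.mul_mem_left _ _ (hdmem _ _))
    by_cases hm : m = 0
    · have hmem := haN j0
      rw [hJ] at hmem
      simpa [htt, hm] using hmem
    · simp [htt, hm]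
  have hβval : ∀ m (i : Fin (N + 1)), β m i = rep (r m) i * fInv i.1 := by
    intro m i
    rw [hβeq m]
  have hsolve : ∀ m, ∑ i : Fin (N + 1), β m i * d i.1 0 = r m := by
    intro m
    have h1 : ∀ i : Fin (N + 1), β m i * d i.1 0 = rep (r m) i * s i := by
      intro i
      rw [hβval m i, hd0 i.1]
      have : rep (r m) i * fInv i.1 * ((e i.1 : A) * a i.1)
          = rep (r m) i * ((fInv i.1 * (e i.1 : A)) * a i.1) := by ring
      rw [this, hfInvmul, one_mul]
    rw [Finset.sum_congr rfl fun i _ => h1 i]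
    exact hrep (r m) (hrmem m)
  -- assemble
  set b : ℕ → PowerSeries A := fun j =>
    PowerSeries.mk (fun m => if h : j < N + 1 then β m ⟨j, h⟩ else 0) with hb
  refine ⟨0, N, f, b, a j0, hj0, by rw [pow_zero, one_mul], ?_⟩
  ext m
  rw [← Fin.sum_univ_eq_sum_range (fun i => b i * (PowerSeries.derivativeFun)^[i] f) (N + 1)]
  rw [map_sum]
  have hcoeff : ∀ i : Fin (N + 1),
      PowerSeries.coeff m (b i.1 * (PowerSeries.derivativeFun)^[i.1] f)
        = (∑ p ∈ Finset.range m, β p i * d i.1 (m - p)) + β m i * d i.1 0 := by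
    intro i
    rw [PowerSeries.coeff_mul, Finset.Nat.sum_antidiagonal_eq_sum_range_succ_mk,
      Finset.sum_range_succ]
    congr 1
    · refine Finset.sum_congr rfl fun p hp => ?_
      congr 1
      simp only [hb, PowerSeries.coeff_mk, dif_pos i.isLt]
    · rw [Nat.sub_self]
      congr 1
      simp only [hb, PowerSeries.coeff_mk, dif_pos i.isLt]
  rw [Finset.sum_congr rfl fun i _ => hcoeff i, Finset.sum_add_distrib, hsolve m]
  have hfin : (∑ i : Fin (N + 1), ∑ p ∈ Finset.range m, β p i * d i.1 (m - p)) + r m = tt m := by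
    rw [hrr]; ring
  rw [hfin]
  rw [PowerSeries.coeff_C]
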